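/- Let X ⊆ 2^ω and g : ℕ → ℕ be such that |{ x↾g(n) : x ∈ X }| > n for all n. Let h : ℕ → ℕ satisfy h(n) > g(n) for all n, and let 𝒰_h = { C_F : ∃n, F ⊆ 2^{h(n)}, |F| ≤ n } with C_F = { x : x↾h(n) ∈ F }. Then no single member of 𝒰_h contains X, but 𝒰_h is an ω-cover of 2^ω (assuming h(n) > 2^n for all n). -/

import Mathlib

/-- The family 𝒰_h of sets C_F = {x : x↾h(n) ∈ F} for F ⊆ 2^{h(n)}, |F| ≤ n. -/
def UFam (h : ℕ → ℕ) : Set (Set (ℕ → Bool)) :=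
  {C | ∃ (n : ℕ) (F : Set (Fin (h n) → Bool)), F.ncard ≤ n ∧
    C = {x : ℕ → Bool | (fun i : Fin (h n) => x i) ∈ F}}

/-- If X ⊆ 2^ω has more than n restrictions at level g(n) for each n, and
h(n) > g(n), h(n) > 2^n for all n, then no member of 𝒰_h contains X, but 𝒰_h is
an ω-cover of 2^ω. -/
theorem stmt16 (X : Set (ℕ → Bool)) (g h : ℕ → ℕ)
    (hg : ∀ n, n < ((fun x : ℕ → Bool => (fun i : Fin (g n) => x i)) '' X).ncard)
    (hgh : ∀ n, g n < h n) (h2 : ∀ n, 2 ^ n < h n) :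
    (∀ C ∈ UFam h, ¬ X ⊆ C) ∧
      (∀ A : Set (ℕ → Bool), A.Finite → ∃ C ∈ UFam h, A ⊆ C) ∧
      (Set.univ : Set (ℕ → Bool)) ∉ UFam h := by
  refine ⟨?_, ?_, ?_⟩
  · rintro C ⟨n, F, hF, rfl⟩ hXC
    have himg : (fun x : ℕ → Bool => fun i : Fin (g n) => x i) '' X
        = (fun f : Fin (h n) → Bool => fun i : Fin (g n) => f ⟨i, i.2.trans (hgh n)⟩) ''
          ((fun x : ℕ → Bool => fun i : Fin (h n) => x i) '' X) := by
      rw [← Set.image_comp]; rfl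
    have h1 : ((fun x : ℕ → Bool => fun i : Fin (g n) => x i) '' X).ncard
        ≤ ((fun x : ℕ → Bool => fun i : Fin (h n) => x i) '' X).ncard := by
      rw [himg]; exact Set.ncard_image_le (Set.toFinite _)
    have hsub : ((fun x : ℕ → Bool => fun i : Fin (h n) => x i) '' X) ⊆ F := by
      rintro _ ⟨x, hx, rfl⟩; exact hXC hx
    have h3 := Set.ncard_le_ncard hsub (Set.toFinite _)
    exact absurd hF (Nat.not_le.mpr (lt_of_lt_of_le (hg n) (h1.trans h3)))
  · intro A hA
    refine ⟨{x : ℕ → Bool | (fun i : Fin (h A.ncard) => x i) ∈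
        (fun x : ℕ → Bool => fun i : Fin (h A.ncard) => x i) '' A},
      ⟨A.ncard, (fun x : ℕ → Bool => fun i : Fin (h A.ncard) => x i) '' A,
      Set.ncard_image_le hA, rfl⟩, fun x hx => ⟨x, hx, rfl⟩⟩
  · rintro ⟨n, F, hF, hFe⟩
    have hmem : ∀ x : ℕ → Bool, (fun i : Fin (h n) => x i) ∈ F := by
      intro x
      have : x ∈ (Set.univ : Set (ℕ → Bool)) := trivial
      rw [hFe] at this; exact this
    have hFu : F = Set.univ := by
      ext s
      simp only [Set.mem_univ, iff_true]
      have := hmem (fun j => if hj : j < h n then s ⟨j, hj⟩ else false)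
      convert this using 1
      funext i
      simp [i.2]
    have hcard : F.ncard = 2 ^ h n := by
      rw [hFu, Set.ncard_univ]
      simp [Nat.card_eq_fintype_card]
    have hn1 : n < 2 ^ n := Nat.lt_two_pow_self (n := n)
    have hn2 : h n < 2 ^ h n := Nat.lt_two_pow_self (n := h n)
    have := h2 n
    omega
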